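/- For any finite graph G = (V, E), the infinite product A_G = ∏_{p prime} Q_G(1/p) converges to a strictly positive real number. -/
import Mathlib


/-- The number of independent sets of size `m` in the graph `G`
(sets of pairwise non-adjacent vertices). -/
noncomputable def indepCount {V : Type} (G : SimpleGraph V) (m : ℕ) : ℕ :=
  Nat.card {s : Finset V // s.card = m ∧ ∀ u ∈ s, ∀ v ∈ s, ¬ G.Adj u v}

/-- The polynomial `Q_G(z) = ∑_m i_m(G) (1−z)^{|V|−m} z^m`. -/
noncomputable def QG {V : Type} (G : SimpleGraph V) (z : ℝ) : ℝ :=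
  ∑ m ∈ Finset.range (Nat.card V + 1),
    (indepCount G m : ℝ) * (1 - z) ^ (Nat.card V - m) * z ^ m

open Filter

open scoped Classical in
noncomputable def indepFinsets {V : Type} [Fintype V] (G : SimpleGraph V) :
    Finset (Finset V) :=
  Finset.univ.filter fun s => ∀ u ∈ s, ∀ v ∈ s, ¬ G.Adj u v

lemma indepCount_eq {V : Type} [Fintype V] (G : SimpleGraph V) (m : ℕ) :
    indepCount G m = ((indepFinsets G).filter fun s => s.card = m).card := by
  classical
  rw [indepCount, Nat.card_eq_fintype_card, Fintype.card_subtype]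
  congr 1
  ext s
  simp [indepFinsets, and_comm]

lemma QG_eq {V : Type} [Fintype V] (G : SimpleGraph V) (z : ℝ) :
    QG G z = ∑ s ∈ indepFinsets G, (1 - z) ^ (Nat.card V - s.card) * z ^ s.card := by
  classical
  rw [← Finset.sum_fiberwise_of_maps_to (g := fun s : Finset V => s.card)
      (t := Finset.range (Nat.card V + 1))
      (fun s _ => by
        simp only [Finset.mem_range, Nat.lt_succ_iff, Nat.card_eq_fintype_card]
        simpa using s.card_le_univ), QG]
  refine Finset.sum_congr rfl fun m _ => ?_
  rw [Finset.sum_congr rfl (fun s hs => by rw [(Finset.mem_filter.1 hs).2]),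
    Finset.sum_const, indepCount_eq, nsmul_eq_mul, mul_assoc]

lemma sum_weights {V : Type} [Fintype V] (z : ℝ) :
    ∑ s : Finset V, (1 - z) ^ (Nat.card V - s.card) * z ^ s.card = 1 := by
  classical
  have h := Finset.prod_add (fun _ : V => z) (fun _ => 1 - z) Finset.univ
  rw [Finset.powerset_univ] at h
  simp only [Finset.prod_const, Finset.card_univ_diff] at h
  have h1 : (z + (1 - z)) ^ (Finset.univ : Finset V).card = 1 := by norm_num
  rw [h1] at h
  rw [Nat.card_eq_fintype_card]
  calc ∑ s : Finset V, (1 - z) ^ (Fintype.card V - s.card) * z ^ s.card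
      = ∑ s : Finset V, z ^ s.card * (1 - z) ^ (Fintype.card V - s.card) :=
        Finset.sum_congr rfl fun s _ => mul_comm _ _
    _ = 1 := h.symm

lemma QG_le_one {V : Type} [Fintype V] (G : SimpleGraph V) {z : ℝ}
    (hz0 : 0 ≤ z) (hz1 : z ≤ 1) : QG G z ≤ 1 := by
  classical
  have h1 : (0:ℝ) ≤ 1 - z := by linarith
  rw [QG_eq]
  calc ∑ s ∈ indepFinsets G, (1 - z) ^ (Nat.card V - s.card) * z ^ s.card
      ≤ ∑ s : Finset V, (1 - z) ^ (Nat.card V - s.card) * z ^ s.card :=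
        Finset.sum_le_sum_of_subset_of_nonneg (Finset.subset_univ _)
          (fun s _ _ => by positivity)
    _ = 1 := sum_weights z

lemma QG_pos {V : Type} [Fintype V] (G : SimpleGraph V) {z : ℝ}
    (hz0 : 0 ≤ z) (hz1 : z < 1) : 0 < QG G z := by
  classical
  rw [QG_eq]
  have h1 : (0:ℝ) < 1 - z := by linarith
  have hmem : (∅ : Finset V) ∈ indepFinsets G := by simp [indepFinsets]
  calc (0:ℝ) < (1 - z) ^ (Nat.card V - (∅ : Finset V).card) * z ^ (∅ : Finset V).card := by
        simp; positivity
    _ ≤ _ := Finset.single_le_sum (f := fun s : Finset V =>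
        (1 - z) ^ (Nat.card V - s.card) * z ^ s.card)
        (fun s _ => by positivity) hmem

lemma one_sub_le_QG {V : Type} [Fintype V] (G : SimpleGraph V) {z : ℝ}
    (hz0 : 0 ≤ z) (hz1 : z ≤ 1) :
    1 - 2 ^ (Nat.card V) * z ^ 2 ≤ QG G z := by
  classical
  have h1 : (0:ℝ) ≤ 1 - z := by linarith
  have hsplit : QG G z + ∑ s ∈ Finset.univ \ indepFinsets G,
      (1 - z) ^ (Nat.card V - s.card) * z ^ s.card = 1 := by
    rw [QG_eq, add_comm, Finset.sum_sdiff (Finset.subset_univ _), sum_weights]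
  have hbound : ∑ s ∈ Finset.univ \ indepFinsets G,
      (1 - z) ^ (Nat.card V - s.card) * z ^ s.card ≤ 2 ^ (Nat.card V) * z ^ 2 := by
    have hterm : ∀ s ∈ Finset.univ \ indepFinsets G,
        (1 - z) ^ (Nat.card V - s.card) * z ^ s.card ≤ z ^ 2 := by
      intro s hs
      rw [Finset.mem_sdiff] at hs
      have hNI : ¬ (∀ u ∈ s, ∀ v ∈ s, ¬ G.Adj u v) := by
        intro h
        refine hs.2 ?_
        simp only [indepFinsets, Finset.mem_filter, Finset.mem_univ, true_and]
        exact h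
      push_neg at hNI
      obtain ⟨u, hu, v, hv, huv⟩ := hNI
      have hcard : 2 ≤ s.card := by
        rw [Nat.succ_le_iff, Finset.one_lt_card]
        exact ⟨u, hu, v, hv, G.ne_of_adj huv⟩
      calc (1 - z) ^ (Nat.card V - s.card) * z ^ s.card
          ≤ 1 * z ^ s.card := by
            apply mul_le_mul_of_nonneg_right (pow_le_one₀ h1 (by linarith)) (by positivity)
        _ = z ^ s.card := one_mul _
        _ ≤ z ^ 2 := pow_le_pow_of_le_one hz0 hz1 hcard
    calc ∑ s ∈ Finset.univ \ indepFinsets G,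
        (1 - z) ^ (Nat.card V - s.card) * z ^ s.card
        ≤ ∑ _s ∈ Finset.univ \ indepFinsets G, z ^ 2 := Finset.sum_le_sum hterm
      _ = (Finset.univ \ indepFinsets G).card * z ^ 2 := by
          rw [Finset.sum_const, nsmul_eq_mul]
      _ ≤ 2 ^ (Nat.card V) * z ^ 2 := by
          apply mul_le_mul_of_nonneg_right _ (by positivity)
          rw [Nat.card_eq_fintype_card]
          have h3 : (Finset.univ \ indepFinsets G).card ≤ 2 ^ Fintype.card V := by
            simpa [Finset.card_univ, Fintype.card_finset] using
              Finset.card_le_univ (Finset.univ \ indepFinsets G)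
          exact_mod_cast h3
  linarith

/-- Weierstrass product inequality. -/
lemma one_sub_sum_le_prod_one_sub (a : ℕ → ℝ) :
    ∀ (s : Finset ℕ), (∀ i ∈ s, 0 ≤ a i) → (∀ i ∈ s, a i ≤ 1) →
      1 - ∑ i ∈ s, a i ≤ ∏ i ∈ s, (1 - a i) := by
  intro s
  induction s using Finset.cons_induction with
  | empty => simp
  | cons j s hj ih =>
    intro h0 h1
    rw [Finset.sum_cons, Finset.prod_cons]
    have hS : 0 ≤ ∑ i ∈ s, a i :=
      Finset.sum_nonneg fun i hi => h0 i (Finset.mem_cons_of_mem hi)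
    have hprod := ih (fun i hi => h0 i (Finset.mem_cons_of_mem hi))
      (fun i hi => h1 i (Finset.mem_cons_of_mem hi))
    have haj0 : 0 ≤ a j := h0 j (Finset.mem_cons_self j s)
    have haj1 : a j ≤ 1 := h1 j (Finset.mem_cons_self j s)
    nlinarith [mul_le_mul_of_nonneg_left hprod (by linarith : (0:ℝ) ≤ 1 - a j),
      mul_nonneg haj0 hS]

/-- For any finite graph `G`, the infinite product `A_G = ∏_{p prime} Q_G(1/p)`
converges to a strictly positive real number. -/
theorem prod_QG_primes_converges {V : Type} [Fintype V] (G : SimpleGraph V) :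
    ∃ L : ℝ, 0 < L ∧
      Tendsto (fun N : ℕ =>
          ∏ p ∈ (Finset.range N).filter Nat.Prime, QG G (1 / (p : ℝ)))
        atTop (nhds L) := by
  classical
  set n := Nat.card V with hn
  set c : ℝ := 2 ^ n with hc
  have hc1 : (1:ℝ) ≤ c := one_le_pow₀ (by norm_num)
  have hc0 : 0 < c := by linarith
  set f : ℕ → ℝ := fun p => QG G (1 / (p : ℝ)) with hfdef
  set P : ℕ → ℝ := fun N => ∏ p ∈ (Finset.range N).filter Nat.Prime, f p with hPdef
  -- bounds on f at primes
  have hz : ∀ p : ℕ, p.Prime → 0 ≤ 1/(p:ℝ) ∧ 1/(p:ℝ) < 1 := by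
    intro p hp
    have h2 : (2:ℝ) ≤ p := by exact_mod_cast hp.two_le
    constructor
    · positivity
    · rw [div_lt_one (by linarith)]; linarith
  have hf_pos : ∀ p : ℕ, p.Prime → 0 < f p := fun p hp =>
    QG_pos G (hz p hp).1 (hz p hp).2
  have hf_le : ∀ p : ℕ, p.Prime → f p ≤ 1 := fun p hp =>
    QG_le_one G (hz p hp).1 (hz p hp).2.le
  have hf_ge : ∀ p : ℕ, p.Prime → 1 - c / (p:ℝ)^2 ≤ f p := by
    intro p hp
    have h := one_sub_le_QG G (hz p hp).1 (hz p hp).2.le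
    calc 1 - c / (p:ℝ)^2 = 1 - 2 ^ Nat.card V * (1/(p:ℝ))^2 := by rw [hc, hn]; ring
      _ ≤ QG G (1/(p:ℝ)) := h
      _ = f p := by rw [hfdef]
  have hPpos : ∀ N, 0 < P N := fun N =>
    Finset.prod_pos fun p hp => hf_pos p (Finset.mem_filter.1 hp).2
  have decomp : ∀ a b : ℕ, a ≤ b →
      P b = P a * ∏ p ∈ (Finset.Ico a b).filter Nat.Prime, f p := by
    intro a b hab
    rw [hPdef]
    simp only
    rw [Finset.range_eq_Ico, ← Finset.Ico_union_Ico_eq_Ico (Nat.zero_le a) hab,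
      Finset.filter_union,
      Finset.prod_union (Finset.disjoint_filter_filter
        (Finset.Ico_disjoint_Ico_consecutive 0 a b)), ← Finset.range_eq_Ico]
  have hPanti : Antitone P := by
    intro a b hab
    rw [decomp a b hab]
    have h1 : ∏ p ∈ (Finset.Ico a b).filter Nat.Prime, f p ≤ 1 :=
      Finset.prod_le_one (fun p hp => (hf_pos p (Finset.mem_filter.1 hp).2).le)
        (fun p hp => hf_le p (Finset.mem_filter.1 hp).2)
    have h0 : 0 ≤ ∏ p ∈ (Finset.Ico a b).filter Nat.Prime, f p :=
      Finset.prod_nonneg fun p hp => (hf_pos p (Finset.mem_filter.1 hp).2).le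
    nlinarith [hPpos a]
  -- choose the cutoff
  obtain ⟨k, hk⟩ := exists_nat_ge (4 * c)
  set M := k + 1 with hM
  have key : ∀ N, 1/2 ≤ ∏ p ∈ (Finset.Ico M N).filter Nat.Prime, f p := by
    intro N
    set T := (Finset.Ico M N).filter Nat.Prime with hT
    have hTmem : ∀ p ∈ T, p.Prime ∧ k < p ∧ p < N := by
      intro p hp
      rw [hT, Finset.mem_filter, Finset.mem_Ico] at hp
      exact ⟨hp.2, by omega, hp.1.2⟩
    have hterm1 : ∀ p ∈ T, c / (p:ℝ)^2 ≤ 1/4 := by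
      intro p hp
      obtain ⟨hp1, hp2, _⟩ := hTmem p hp
      have hkp : (4:ℝ) * c < p := by
        have : (k:ℝ) < p := by exact_mod_cast hp2
        linarith
      have hp0 : (1:ℝ) ≤ p := by exact_mod_cast hp1.one_lt.le
      have hpsq : (4:ℝ) * c ≤ (p:ℝ)^2 := by nlinarith
      rw [div_le_div_iff₀ (by positivity) (by norm_num)]
      linarith
    have hterm0 : ∀ p ∈ T, (0:ℝ) ≤ c / (p:ℝ)^2 := by
      intro p hp
      obtain ⟨hp1, _, _⟩ := hTmem p hp
      have : (0:ℝ) < p := by exact_mod_cast hp1.pos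
      positivity
    have hsum : ∑ p ∈ T, c / (p:ℝ)^2 ≤ 1/2 := by
      have h1 : ∑ p ∈ T, c / (p:ℝ)^2 = c * ∑ p ∈ T, ((p:ℝ)^2)⁻¹ := by
        rw [Finset.mul_sum]
        exact Finset.sum_congr rfl fun p _ => div_eq_mul_inv _ _
      have h2 : ∑ p ∈ T, ((p:ℝ)^2)⁻¹ ≤ ∑ i ∈ Finset.Ioo k N, ((i:ℝ)^2)⁻¹ := by
        apply Finset.sum_le_sum_of_subset_of_nonneg
        · intro p hp
          obtain ⟨_, h1', h2'⟩ := hTmem p hp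
          exact Finset.mem_Ioo.2 ⟨h1', h2'⟩
        · intro i _ _; positivity
      have h3 := sum_Ioo_inv_sq_le (α := ℝ) k N
      have hden : (0:ℝ) < (k:ℝ) + 1 := by positivity
      have h4 : c * (2 / ((k:ℝ) + 1)) ≤ 1/2 := by
        rw [mul_div_assoc', div_le_iff₀ hden]
        nlinarith
      calc ∑ p ∈ T, c / (p:ℝ)^2 = c * ∑ p ∈ T, ((p:ℝ)^2)⁻¹ := h1
        _ ≤ c * ∑ i ∈ Finset.Ioo k N, ((i:ℝ)^2)⁻¹ :=
            mul_le_mul_of_nonneg_left h2 hc0.le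
        _ ≤ c * (2 / ((k:ℝ) + 1)) := by
            apply mul_le_mul_of_nonneg_left _ hc0.le
            exact_mod_cast h3
        _ ≤ 1/2 := h4
    calc (1:ℝ)/2 ≤ 1 - ∑ p ∈ T, c / (p:ℝ)^2 := by linarith
      _ ≤ ∏ p ∈ T, (1 - c / (p:ℝ)^2) :=
          one_sub_sum_le_prod_one_sub _ T hterm0
            (fun p hp => by linarith [hterm1 p hp])
      _ ≤ ∏ p ∈ T, f p := by
          apply Finset.prod_le_prod
          · intro p hp; linarith [hterm1 p hp]
          · intro p hp; exact hf_ge p (hTmem p hp).1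
  have hb : ∀ N, P M / 2 ≤ P N := by
    intro N
    rcases le_total N M with h | h
    · have := hPanti h
      linarith [hPpos M]
    · rw [decomp M N h]
      have := key N
      nlinarith [hPpos M]
  have hbdd : BddBelow (Set.range P) := ⟨0, by
    rintro _ ⟨N, rfl⟩; exact (hPpos N).le⟩
  refine ⟨⨅ N, P N, ?_, tendsto_atTop_ciInf hPanti hbdd⟩
  have := le_ciInf hb
  have hPM := hPpos M
  linarith
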